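/- Let D ⊆ Nodes be a set of failed nodes, and suppose the set of zones z in which D contains at least f+1 nodes (i.e., |D_z| ≥ f+1, where D_z = {x ∈ D : x.1 = z}) has cardinality at most F. If moreover Z ≥ 2F + 1, then there exists a phase-2 quorum q2 ∈ Q2 with q2 ∩ D = ∅; that is, WPaxos can form a valid phase-2 quorum despite up to F failed zones and up to f crashed nodes in every other zone. -/

import Mathlib

/-- A node lives in one of `Z` zones, each zone having `2f+1` nodes. -/
abbrev Node (f Z : ℕ) := Fin Z × Fin (2 * f + 1)

/-- The part of a set of nodes `q` lying in zone `z`. -/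
def zpart (f Z : ℕ) (q : Finset (Node f Z)) (z : Fin Z) : Finset (Node f Z) :=
  q.filter (fun x => x.1 = z)

/-- WPaxos phase-1 quorums: `Z - F` zones, `f+1` nodes in each touched zone. -/
def Q1 (f F Z : ℕ) : Set (Finset (Node f Z)) :=
  {q | (q.image Prod.fst).card = Z - F ∧
       ∀ z : Fin Z, (zpart f Z q z).Nonempty → (zpart f Z q z).card = f + 1}

/-- WPaxos phase-2 quorums: `F + 1` zones, `f+1` nodes in each touched zone. -/
def Q2 (f F Z : ℕ) : Set (Finset (Node f Z)) :=
  {q | (q.image Prod.fst).card = F + 1 ∧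
       ∀ z : Fin Z, (zpart f Z q z).Nonempty → (zpart f Z q z).card = f + 1}

/-- If at most `F` zones contain `f+1` or more failed nodes and
`Z ≥ 2F + 1`, then some phase-2 quorum avoids all failed nodes. -/
theorem wpaxos_q2_fault_tolerance (f F Z : ℕ) (hFZ : F < Z)
    (hZ : 2 * F + 1 ≤ Z)
    (D : Finset (Node f Z))
    (hD : (Finset.univ.filter
        (fun z : Fin Z => f + 1 ≤ (zpart f Z D z).card)).card ≤ F) :
    ∃ q2 ∈ Q2 f F Z, q2 ∩ D = ∅ := by
  classical
  -- good zones: zones with at most f failed nodes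
  set G : Finset (Fin Z) :=
    Finset.univ.filter (fun z : Fin Z => (zpart f Z D z).card ≤ f) with hG
  have hGcard : F + 1 ≤ G.card := by
    have h1 : G = (Finset.univ.filter
        (fun z : Fin Z => f + 1 ≤ (zpart f Z D z).card))ᶜ := by
      ext z
      simp only [hG, Finset.mem_filter, Finset.mem_compl, Finset.mem_univ,
        true_and, not_le]
      omega
    have h2 : G.card = Z - (Finset.univ.filter
        (fun z : Fin Z => f + 1 ≤ (zpart f Z D z).card)).card := by
      rw [h1, Finset.card_compl, Fintype.card_fin]
    omega
  obtain ⟨S, hSG, hScard⟩ := Finset.exists_subset_card_eq hGcard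
  -- available nodes in zone z
  set A : Fin Z → Finset (Node f Z) :=
    fun z => (Finset.univ.filter (fun x : Node f Z => x.1 = z)) \ D with hA
  have hAcard : ∀ z ∈ S, f + 1 ≤ (A z).card := by
    intro z hz
    have hzG : z ∈ G := hSG hz
    have hzf : (zpart f Z D z).card ≤ f := by
      simpa [hG] using hzG
    have hfull : (Finset.univ.filter (fun x : Node f Z => x.1 = z)).card
        = 2 * f + 1 := by
      have : Finset.univ.filter (fun x : Node f Z => x.1 = z)
          = {z} ×ˢ (Finset.univ : Finset (Fin (2 * f + 1))) := by
        ext x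
        simp only [Finset.mem_filter, Finset.mem_univ, true_and,
          Finset.mem_product, Finset.mem_singleton]
        constructor
        · intro h; exact ⟨h, trivial⟩
        · intro h; exact h.1
      rw [this, Finset.card_product]
      simp
    have hint : (Finset.univ.filter (fun x : Node f Z => x.1 = z)) ∩ D
        = zpart f Z D z := by
      ext x
      simp [zpart, and_comm]
    have h3 : A z = (Finset.univ.filter (fun x : Node f Z => x.1 = z))
        \ ((Finset.univ.filter (fun x : Node f Z => x.1 = z)) ∩ D) := by
      show (Finset.univ.filter (fun x : Node f Z => x.1 = z)) \ D = _
      rw [Finset.sdiff_inter_self_left]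
    have : (A z).card = 2 * f + 1 - (zpart f Z D z).card := by
      rw [h3, Finset.card_sdiff_of_subset Finset.inter_subset_left, hfull, hint]
    omega
  have hch : ∀ z : Fin Z, ∃ t : Finset (Node f Z),
      t ⊆ A z ∧ (z ∈ S → t.card = f + 1) := by
    intro z
    by_cases hz : z ∈ S
    · obtain ⟨t, ht, htc⟩ := Finset.exists_subset_card_eq (hAcard z hz)
      exact ⟨t, ht, fun _ => htc⟩
    · exact ⟨∅, Finset.empty_subset _, fun h => absurd h hz⟩
  choose T hT1 hT2 using hch
  have hTz : ∀ z : Fin Z, ∀ x ∈ T z, x.1 = z := by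
    intro z x hx
    have := hT1 z hx
    simp [hA] at this
    exact this.1
  refine ⟨S.biUnion T, ⟨?_, ?_⟩, ?_⟩
  · -- image of fst is S, card F+1
    have : (S.biUnion T).image Prod.fst = S := by
      ext z
      simp only [Finset.mem_image, Finset.mem_biUnion]
      constructor
      · rintro ⟨x, ⟨z', hz', hx⟩, rfl⟩
        rwa [hTz z' x hx]
      · intro hz
        have hne : (T z).Nonempty := by
          rw [← Finset.card_pos, hT2 z hz]; omega
        obtain ⟨x, hx⟩ := hne
        exact ⟨x, ⟨z, hz, hx⟩, hTz z x hx⟩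
    rw [this, hScard]
  · intro z hne
    by_cases hz : z ∈ S
    · have h : zpart f Z (S.biUnion T) z = T z := by
        ext x
        simp only [zpart, Finset.mem_filter, Finset.mem_biUnion]
        constructor
        · rintro ⟨⟨z', hz', hx⟩, hx1⟩
          have := hTz z' x hx
          rw [this] at hx1
          subst hx1
          exact hx
        · intro hx
          exact ⟨⟨z, hz, hx⟩, hTz z x hx⟩
      rw [h]
      exact hT2 z hz
    · exfalso
      obtain ⟨x, hx⟩ := hne
      simp only [zpart, Finset.mem_filter, Finset.mem_biUnion] at hx
      obtain ⟨⟨z', hz', hx'⟩, hx1⟩ := hx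
      have := hTz z' x hx'
      rw [this] at hx1
      subst hx1
      exact hz hz'
  · -- disjoint from D
    ext x
    simp only [Finset.mem_inter, Finset.mem_biUnion, Finset.notMem_empty,
      iff_false, not_and]
    rintro ⟨z, hz, hx⟩
    have := hT1 z hx
    simp [hA] at this
    exact this.2
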